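/- arXiv:1511.02711 — 4 statements merged into one kernel-verified Lean document; each statement's English description precedes it below -/
import Mathlib

section
/- For each n, let Zₙ be a nonnegative random variable with E[Zₙ] bounded uniformly in n. Then Zₙ - E[Zₙ] → 0 in probability if and only if E[exp(-Zₙ)] - exp(-E[Zₙ]) → 0. -/
open MeasureTheory Filter


-- Lipschitz bound for exp(-·) on nonneg reals
lemma exp_neg_lip {a b : ℝ} (ha : 0 ≤ a) (hb : 0 ≤ b) :
    |Real.exp (-a) - Real.exp (-b)| ≤ |a - b| := by
  wlog h : a ≤ b generalizing a b
  · rw [abs_sub_comm, abs_sub_comm a b]; exact this hb ha (le_of_not_ge h)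
  have h1 : Real.exp (-a) * Real.exp (a - b) = Real.exp (-b) := by
    rw [← Real.exp_add]; ring_nf
  have h2 : a - b + 1 ≤ Real.exp (a - b) := Real.add_one_le_exp _
  have h3 : Real.exp (-a) ≤ 1 := Real.exp_le_one_iff.2 (by linarith)
  have h4 : (0:ℝ) < Real.exp (-a) := Real.exp_pos _
  rw [abs_of_nonpos (by linarith : a - b ≤ 0),
    abs_of_nonneg (by simp only [sub_nonneg]; exact Real.exp_le_exp.2 (by linarith))]
  nlinarith

-- convexity: φ(x) ≥ 0
lemma phi_nonneg (x m : ℝ) :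
    0 ≤ Real.exp (-x) - Real.exp (-m) + Real.exp (-m) * (x - m) := by
  have h1 : Real.exp (-m) * Real.exp (m - x) = Real.exp (-x) := by
    rw [← Real.exp_add]; ring_nf
  have h2 : m - x + 1 ≤ Real.exp (m - x) := Real.add_one_le_exp _
  have h4 : (0:ℝ) < Real.exp (-m) := Real.exp_pos _
  nlinarith

lemma phi_lb {C ε x m : ℝ} (hε : 0 < ε) (hmC : m ≤ C) (hx : ε < |x - m|) :
    Real.exp (-C) * min (Real.exp (-ε) - 1 + ε) (Real.exp ε - 1 - ε)
      ≤ Real.exp (-x) - Real.exp (-m) + Real.exp (-m) * (x - m) := by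
  have hmCexp : Real.exp (-C) ≤ Real.exp (-m) := Real.exp_le_exp.2 (by linarith)
  have hCpos : (0:ℝ) < Real.exp (-C) := Real.exp_pos _
  have hmin1 : 0 < Real.exp (-ε) - 1 + ε := by
    nlinarith [Real.add_one_lt_exp (show (-ε) ≠ 0 by linarith)]
  have hmin2 : 0 < Real.exp ε - 1 - ε := by
    nlinarith [Real.add_one_lt_exp (show ε ≠ 0 by linarith)]
  have hminpos : 0 < min (Real.exp (-ε) - 1 + ε) (Real.exp ε - 1 - ε) := lt_min hmin1 hmin2
  have hid : Real.exp (-m) * Real.exp (m - x) = Real.exp (-x) := by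
    rw [← Real.exp_add]; ring_nf
  -- ψ(t) := exp(-t) - 1 + t  with t = x - m ; show min ≤ ψ(t)
  have hpsi : min (Real.exp (-ε) - 1 + ε) (Real.exp ε - 1 - ε)
      ≤ Real.exp (m - x) - 1 + (x - m) := by
    rcases lt_abs.1 hx with ht | ht
    · -- t = x - m ≥ ε : exp(-t) - 1 + t ≥ exp(-ε) - 1 + ε
      refine le_trans (min_le_left _ _) ?_
      have e1 : Real.exp (-ε) * Real.exp (ε - (x - m)) = Real.exp (m - x) := by
        rw [← Real.exp_add]; ring_nf
      have e2 : ε - (x - m) + 1 ≤ Real.exp (ε - (x - m)) := Real.add_one_le_exp _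
      have e3 : Real.exp (-ε) ≤ 1 := Real.exp_le_one_iff.2 (by linarith)
      have e4 : (0:ℝ) < Real.exp (-ε) := Real.exp_pos _
      nlinarith
    · -- x - m ≤ -ε, i.e. s := m - x ≥ ε : exp(s) - 1 - s ≥ exp(ε) - 1 - ε
      refine le_trans (min_le_right _ _) ?_
      have e1 : Real.exp ε * Real.exp ((m - x) - ε) = Real.exp (m - x) := by
        rw [← Real.exp_add]; ring_nf
      have e2 : (m - x) - ε + 1 ≤ Real.exp ((m - x) - ε) := Real.add_one_le_exp _
      have e3 : (1:ℝ) ≤ Real.exp ε := Real.one_le_exp (by linarith)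
      nlinarith
  calc Real.exp (-C) * min (Real.exp (-ε) - 1 + ε) (Real.exp ε - 1 - ε)
      ≤ Real.exp (-m) * (Real.exp (m - x) - 1 + (x - m)) := by
        apply mul_le_mul hmCexp hpsi (le_of_lt hminpos) (le_of_lt (Real.exp_pos _))
    _ = Real.exp (-x) - Real.exp (-m) + Real.exp (-m) * (x - m) := by
        rw [mul_add, mul_sub, hid]; ring

theorem stmt_aux {Ω : Type*} [MeasurableSpace Ω] (μ : Measure Ω) [IsProbabilityMeasure μ]
    (Z : ℕ → Ω → ℝ) (hmeas : ∀ n, Measurable (Z n)) (hint : ∀ n, Integrable (Z n) μ)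
    (hpos : ∀ n, 0 ≤ᵐ[μ] Z n) (C : ℝ) (hbd : ∀ n, ∫ ω, Z n ω ∂μ ≤ C) :
    (∀ ε > (0 : ℝ),
        Tendsto (fun n => μ {ω | ε < |Z n ω - ∫ ω', Z n ω' ∂μ|}) atTop (nhds 0)) ↔
      Tendsto (fun n => (∫ ω, Real.exp (-(Z n ω)) ∂μ) - Real.exp (-(∫ ω, Z n ω ∂μ)))
        atTop (nhds 0) := by
  set m : ℕ → ℝ := fun n => ∫ ω, Z n ω ∂μ with hm
  have hm0 : ∀ n, 0 ≤ m n := fun n => integral_nonneg_of_ae (hpos n)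
  have hexpmeas : ∀ n, Measurable (fun ω => Real.exp (-(Z n ω))) :=
    fun n => (Real.measurable_exp.comp (hmeas n).neg)
  have hexp_int : ∀ n, Integrable (fun ω => Real.exp (-(Z n ω))) μ := by
    intro n
    refine Integrable.mono' (integrable_const 1) (hexpmeas n).aestronglyMeasurable ?_
    filter_upwards [hpos n] with ω hω
    simp only [Pi.zero_apply] at hω
    rw [Real.norm_eq_abs, abs_of_pos (Real.exp_pos _)]
    exact Real.exp_le_one_iff.2 (by linarith)
  have hEmeas : ∀ n (ε : ℝ), MeasurableSet {ω | ε < |Z n ω - m n|} :=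
    fun n ε => measurableSet_lt measurable_const ((hmeas n).sub_const _).abs
  constructor
  · -- forward
    intro h
    rw [NormedAddCommGroup.tendsto_nhds_zero]
    intro ε hε
    have h2 := h (ε / 2) (by positivity)
    have h3 : Tendsto (fun n => (μ {ω | ε / 2 < |Z n ω - m n|}).toReal) atTop (nhds 0) := by
      have := (ENNReal.tendsto_toReal (by simp)).comp h2
      exact this
    filter_upwards [h3.eventually_lt_const (show (0:ℝ) < ε / 2 by positivity)] with n hn
    have hIeq : (∫ ω, Real.exp (-(Z n ω)) ∂μ) - Real.exp (-(m n))
        = ∫ ω, (Real.exp (-(Z n ω)) - Real.exp (-(m n))) ∂μ := by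
      rw [integral_sub (hexp_int n) (integrable_const _), integral_const]
      simp
    have hgint : Integrable (fun ω => ε / 2 +
        Set.indicator {ω | ε / 2 < |Z n ω - m n|} (fun _ => (1:ℝ)) ω) μ :=
      (integrable_const _).add ((integrable_const (1:ℝ)).indicator (hEmeas n (ε/2)))
    have hbound : (∫ ω, |Real.exp (-(Z n ω)) - Real.exp (-(m n))| ∂μ)
        ≤ ε / 2 + (μ {ω | ε / 2 < |Z n ω - m n|}).toReal := by
      have hle : ∀ᵐ ω ∂μ, |Real.exp (-(Z n ω)) - Real.exp (-(m n))|
          ≤ ε / 2 + Set.indicator {ω | ε / 2 < |Z n ω - m n|} (fun _ => (1:ℝ)) ω := by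
        filter_upwards [hpos n] with ω hω
        simp only [Pi.zero_apply] at hω
        by_cases hmem : ω ∈ {ω | ε / 2 < |Z n ω - m n|}
        · rw [Set.indicator_of_mem hmem]
          have h1 : Real.exp (-(Z n ω)) ≤ 1 := Real.exp_le_one_iff.2 (by linarith)
          have h2 : Real.exp (-(m n)) ≤ 1 := Real.exp_le_one_iff.2 (by linarith [hm0 n])
          have h3 := Real.exp_pos (-(Z n ω))
          have h4 := Real.exp_pos (-(m n))
          rw [abs_le]; constructor <;> nlinarith
        · rw [Set.indicator_of_notMem hmem, add_zero]
          refine le_trans (exp_neg_lip hω (hm0 n)) ?_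
          simpa [Set.mem_setOf_eq, not_lt] using hmem
      calc (∫ ω, |Real.exp (-(Z n ω)) - Real.exp (-(m n))| ∂μ)
          ≤ ∫ ω, (ε / 2 + Set.indicator {ω | ε / 2 < |Z n ω - m n|} (fun _ => (1:ℝ)) ω) ∂μ := by
            refine integral_mono_ae (((hexp_int n).sub (integrable_const _)).abs) hgint hle
        _ = ε / 2 + (μ {ω | ε / 2 < |Z n ω - m n|}).toReal := by
            rw [integral_add (integrable_const _) ((integrable_const (1:ℝ)).indicator (hEmeas n (ε/2))),
              integral_const, integral_indicator_const _ (hEmeas n (ε/2))]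
            simp [Measure.real]
    calc ‖(∫ ω, Real.exp (-(Z n ω)) ∂μ) - Real.exp (-(m n))‖
        = |∫ ω, (Real.exp (-(Z n ω)) - Real.exp (-(m n))) ∂μ| := by rw [Real.norm_eq_abs, hIeq]
      _ ≤ ∫ ω, |Real.exp (-(Z n ω)) - Real.exp (-(m n))| ∂μ := by
          simpa using norm_integral_le_integral_norm (μ := μ)
            (f := fun ω => Real.exp (-(Z n ω)) - Real.exp (-(m n)))
      _ ≤ ε / 2 + (μ {ω | ε / 2 < |Z n ω - m n|}).toReal := hbound
      _ < ε / 2 + ε / 2 := by linarith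
      _ = ε := by ring
  · -- reverse
    intro h ε hε
    set c : ℝ := Real.exp (-C) * min (Real.exp (-ε) - 1 + ε) (Real.exp ε - 1 - ε) with hc
    have hcpos : 0 < c := by
      apply mul_pos (Real.exp_pos _)
      apply lt_min
      · nlinarith [Real.add_one_lt_exp (show (-ε) ≠ 0 by linarith)]
      · nlinarith [Real.add_one_lt_exp (show ε ≠ 0 by linarith)]
    have key : ∀ n, c * (μ {ω | ε < |Z n ω - m n|}).toReal
        ≤ (∫ ω, Real.exp (-(Z n ω)) ∂μ) - Real.exp (-(m n)) := by
      intro n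
      have hphi_int : Integrable (fun ω => Real.exp (-(Z n ω)) - Real.exp (-(m n))
          + Real.exp (-(m n)) * (Z n ω - m n)) μ :=
        ((hexp_int n).sub (integrable_const _)).add
          (((hint n).sub (integrable_const _)).const_mul _)
      have hA : Integrable (fun ω => Real.exp (-(Z n ω)) - Real.exp (-(m n))) μ :=
        (hexp_int n).sub (integrable_const _)
      have hZm : Integrable (fun ω => Z n ω - m n) μ := (hint n).sub (integrable_const _)
      have hB : Integrable (fun ω => Real.exp (-(m n)) * (Z n ω - m n)) μ := hZm.const_mul _
      have hphieq : (∫ ω, (Real.exp (-(Z n ω)) - Real.exp (-(m n))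
          + Real.exp (-(m n)) * (Z n ω - m n)) ∂μ)
          = (∫ ω, Real.exp (-(Z n ω)) ∂μ) - Real.exp (-(m n)) := by
        rw [integral_add hA hB, integral_sub (hexp_int n) (integrable_const _),
          integral_const_mul, integral_sub (hint n) (integrable_const _), integral_const]
        simp [hm]
      have hind : (∫ ω, Set.indicator {ω | ε < |Z n ω - m n|} (fun _ => c) ω ∂μ)
          = c * (μ {ω | ε < |Z n ω - m n|}).toReal := by
        rw [integral_indicator_const _ (hEmeas n ε)]; simp [mul_comm, Measure.real]
      rw [← hind, ← hphieq]
      refine integral_mono ((integrable_const c).indicator (hEmeas n ε)) hphi_int ?_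
      intro ω
      by_cases hmem : ω ∈ {ω | ε < |Z n ω - m n|}
      · rw [Set.indicator_of_mem hmem]
        exact phi_lb hε (hbd n) hmem
      · rw [Set.indicator_of_notMem hmem]
        exact phi_nonneg _ _
    have htoReal : Tendsto (fun n => (μ {ω | ε < |Z n ω - m n|}).toReal) atTop (nhds 0) := by
      refine squeeze_zero (fun n => ENNReal.toReal_nonneg)
        (fun n => (le_div_iff₀' hcpos).2 (key n)) ?_
      simpa using h.div_const c
    have : Tendsto (fun n => ENNReal.ofReal ((μ {ω | ε < |Z n ω - m n|}).toReal)) atTop (nhds 0) := by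
      simpa using ENNReal.tendsto_ofReal htoReal
    refine this.congr fun n => ?_
    rw [ENNReal.ofReal_toReal (measure_ne_top μ _)]

theorem stmt1 {Ω : Type*} [MeasurableSpace Ω] (μ : Measure Ω) [IsProbabilityMeasure μ]
    (Z : ℕ → Ω → ℝ) (hint : ∀ n, Integrable (Z n) μ)
    (hpos : ∀ n, 0 ≤ᵐ[μ] Z n) (C : ℝ) (hbd : ∀ n, ∫ ω, Z n ω ∂μ ≤ C) :
    (∀ ε > (0 : ℝ),
        Tendsto (fun n => μ {ω | ε < |Z n ω - ∫ ω', Z n ω' ∂μ|}) atTop (nhds 0)) ↔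
      Tendsto (fun n => (∫ ω, Real.exp (-(Z n ω)) ∂μ) - Real.exp (-(∫ ω, Z n ω ∂μ)))
        atTop (nhds 0) := by
  set W : ℕ → Ω → ℝ := fun n => (hint n).1.mk (Z n) with hW
  have hWmeas : ∀ n, Measurable (W n) := fun n => (hint n).1.stronglyMeasurable_mk.measurable
  have hZW : ∀ n, Z n =ᵐ[μ] W n := fun n => (hint n).1.ae_eq_mk
  have hWint : ∀ n, Integrable (W n) μ := fun n => (hint n).congr (hZW n)
  have hWpos : ∀ n, 0 ≤ᵐ[μ] W n := by
    intro n
    filter_upwards [hpos n, hZW n] with ω h1 h2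
    rw [Pi.zero_apply] at *
    rw [← h2]; exact h1
  have hIm : ∀ n, ∫ ω, Z n ω ∂μ = ∫ ω, W n ω ∂μ := fun n => integral_congr_ae (hZW n)
  have hIe : ∀ n, ∫ ω, Real.exp (-(Z n ω)) ∂μ = ∫ ω, Real.exp (-(W n ω)) ∂μ :=
    fun n => integral_congr_ae ((hZW n).mono fun ω h => by simp only []; rw [h])
  have hWbd : ∀ n, ∫ ω, W n ω ∂μ ≤ C := fun n => (hIm n) ▸ hbd n
  have hSet : ∀ (n : ℕ) (ε : ℝ), μ {ω | ε < |Z n ω - ∫ ω', Z n ω' ∂μ|}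
      = μ {ω | ε < |W n ω - ∫ ω', W n ω' ∂μ|} := by
    intro n ε
    refine measure_congr ?_
    filter_upwards [hZW n] with ω h
    rw [eq_iff_iff]
    change (ε < |Z n ω - ∫ ω', Z n ω' ∂μ|) ↔ (ε < |W n ω - ∫ ω', W n ω' ∂μ|)
    rw [h, hIm n]
  have e1 : (fun n => (∫ ω, Real.exp (-(Z n ω)) ∂μ) - Real.exp (-(∫ ω, Z n ω ∂μ)))
      = (fun n => (∫ ω, Real.exp (-(W n ω)) ∂μ) - Real.exp (-(∫ ω, W n ω ∂μ))) :=
    funext fun n => by rw [hIe n, hIm n]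
  rw [e1]
  have e2 : ∀ ε : ℝ, (fun n => μ {ω | ε < |Z n ω - ∫ ω', Z n ω' ∂μ|})
      = (fun n => μ {ω | ε < |W n ω - ∫ ω', W n ω' ∂μ|}) := fun ε => funext fun n => hSet n ε
  constructor
  · intro h
    refine (stmt_aux μ W hWmeas hWint hWpos C hWbd).1 fun ε hε => ?_
    rw [← e2 ε]; exact h ε hε
  · intro h ε hε
    rw [e2 ε]
    exact (stmt_aux μ W hWmeas hWint hWpos C hWbd).2 h ε hε
end

section
/- Let Zₙ be nonnegative random variables with E[Zₙ] bounded, and Yₙ random elements. Then the identity E[Zₙ/(1+Zₙ)] - E[E(Zₙ|Yₙ)/(1 + E(Zₙ|Yₙ))] = -E[(Zₙ - E(Zₙ|Yₙ))²/((1+Zₙ)(1+E(Zₙ|Yₙ))²)] holds. -/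
open MeasureTheory

theorem stmt2 {Ω β : Type*} [MeasurableSpace Ω] [MeasurableSpace β]
    (μ : Measure Ω) [IsProbabilityMeasure μ]
    (Z : Ω → ℝ) (Y : Ω → β) (hY : Measurable Y)
    (hZ : Integrable Z μ) (hpos : 0 ≤ᵐ[μ] Z)
    (W : Ω → ℝ) (hW : W = μ[Z | MeasurableSpace.comap Y inferInstance]) :
    (∫ ω, Z ω / (1 + Z ω) ∂μ) - (∫ ω, W ω / (1 + W ω) ∂μ) =
      -∫ ω, (Z ω - W ω) ^ 2 / ((1 + Z ω) * (1 + W ω) ^ 2) ∂μ := by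
  set m := MeasurableSpace.comap Y inferInstance with hmdef
  have hm : m ≤ _ := hY.comap_le
  have hWint : Integrable W μ := hW ▸ integrable_condExp
  have hWpos : 0 ≤ᵐ[μ] W := hW ▸ condExp_nonneg hpos
  have hWm : StronglyMeasurable[m] W := hW ▸ stronglyMeasurable_condExp
  have hWsm := StronglyMeasurable.aestronglyMeasurable (μ := μ) (hWm.mono hm)
  have hZm : AEMeasurable Z μ := hZ.1.aemeasurable
  have hWmeas : Measurable[m] W := hWm.measurable
  set f : Ω → ℝ := fun ω => ((1 + W ω) ^ 2)⁻¹ with hfdef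
  have hfm : StronglyMeasurable[m] f := by
    have : Measurable[m] f := (((measurable_const.add hWmeas).pow_const 2).inv)
    exact this.stronglyMeasurable
  have hfsm := (hfm.mono hm).aestronglyMeasurable (μ := μ)
  -- a.e. bounds on f
  have hfbound : ∀ᵐ ω ∂μ, 0 < f ω ∧ f ω ≤ 1 := by
    filter_upwards [hWpos] with ω hw
    have hw' : (0:ℝ) ≤ W ω := hw
    have h2 : (0:ℝ) < 1 + W ω := by linarith
    constructor
    · exact inv_pos.2 (pow_pos h2 2)
    · simp only [hfdef]
      rw [inv_le_one_iff₀]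
      right; nlinarith
  have hZf : Integrable (fun ω => f ω * Z ω) μ := by
    refine Integrable.mono' hZ.abs (hfsm.mul hZ.1) ?_
    filter_upwards [hfbound] with ω hf1
    rw [Real.norm_eq_abs, abs_mul, abs_of_pos hf1.1]
    calc f ω * |Z ω| ≤ 1 * |Z ω| :=
          mul_le_mul_of_nonneg_right hf1.2 (abs_nonneg _)
      _ = |Z ω| := one_mul _
  have hWf : Integrable (fun ω => f ω * W ω) μ := by
    refine Integrable.mono' hWint.abs (hfsm.mul hWsm) ?_
    filter_upwards [hfbound] with ω hf1
    rw [Real.norm_eq_abs, abs_mul, abs_of_pos hf1.1]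
    calc f ω * |W ω| ≤ 1 * |W ω| :=
          mul_le_mul_of_nonneg_right hf1.2 (abs_nonneg _)
      _ = |W ω| := one_mul _
  -- key orthogonality: ∫ f * Z = ∫ f * W
  have key : ∫ ω, f ω * Z ω ∂μ = ∫ ω, f ω * W ω ∂μ := by
    have h1 : μ[fun ω => f ω * Z ω|m] =ᵐ[μ] fun ω => f ω * W ω := by
      have := condExp_mul_of_stronglyMeasurable_left (μ := μ) hfm hZf hZ
      refine this.trans ?_
      rw [hW]
      rfl
    calc ∫ ω, f ω * Z ω ∂μ = ∫ ω, (μ[fun ω => f ω * Z ω|m]) ω ∂μ :=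
          (integral_condExp hm).symm
      _ = ∫ ω, f ω * W ω ∂μ := integral_congr_ae h1
  -- integrability of the three displayed integrands
  have hI1 : Integrable (fun ω => Z ω / (1 + Z ω)) μ := by
    refine Integrable.mono' (integrable_const 1)
      ((hZm.div (aemeasurable_const.add hZm)).aestronglyMeasurable) ?_
    filter_upwards [hpos] with ω hz
    have hz' : (0:ℝ) ≤ Z ω := hz
    rw [Real.norm_eq_abs, abs_div, abs_of_nonneg hz',
      abs_of_pos (by linarith : (0:ℝ) < 1 + Z ω), div_le_one (by linarith)]
    linarith
  have hI2 : Integrable (fun ω => W ω / (1 + W ω)) μ := by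
    refine Integrable.mono' (integrable_const 1)
      ((hWsm.aemeasurable.div (aemeasurable_const.add hWsm.aemeasurable)).aestronglyMeasurable) ?_
    filter_upwards [hWpos] with ω hw
    have hw' : (0:ℝ) ≤ W ω := hw
    rw [Real.norm_eq_abs, abs_div, abs_of_nonneg hw',
      abs_of_pos (by linarith : (0:ℝ) < 1 + W ω), div_le_one (by linarith)]
    linarith
  have hI3 : Integrable (fun ω => (Z ω - W ω) ^ 2 / ((1 + Z ω) * (1 + W ω) ^ 2)) μ := by
    refine Integrable.mono' (g := fun ω => |Z ω| + |W ω|) (hZ.abs.add hWint.abs)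
      (((hZm.sub hWsm.aemeasurable).pow_const 2).div
        ((aemeasurable_const.add hZm).mul
          ((aemeasurable_const.add hWsm.aemeasurable).pow_const 2))).aestronglyMeasurable ?_
    filter_upwards [hpos, hWpos] with ω hz hw
    have hz' : (0:ℝ) ≤ Z ω := hz
    have hw' : (0:ℝ) ≤ W ω := hw
    have hd : (0:ℝ) < (1 + Z ω) * (1 + W ω) ^ 2 := by positivity
    rw [Real.norm_eq_abs, abs_div, abs_of_nonneg (by positivity : (0:ℝ) ≤ (Z ω - W ω)^2),
      abs_of_pos hd, div_le_iff₀ hd, abs_of_nonneg hz', abs_of_nonneg hw']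
    have hzw : (Z ω - W ω) ^ 2 ≤ (Z ω + W ω) ^ 2 := by nlinarith [mul_nonneg hz' hw']
    have h5 : Z ω + W ω ≤ (1 + Z ω) * (1 + W ω) ^ 2 := by
      nlinarith [mul_nonneg hz' hw', mul_nonneg (mul_nonneg hz' hw') hw', sq_nonneg (W ω),
        mul_nonneg hz' (sq_nonneg (W ω))]
    nlinarith [mul_le_mul_of_nonneg_left h5 (add_nonneg hz' hw'), hzw]
  -- pointwise identity
  have hpt : ∀ᵐ ω ∂μ, Z ω / (1 + Z ω) - W ω / (1 + W ω) =
      -((Z ω - W ω) ^ 2 / ((1 + Z ω) * (1 + W ω) ^ 2)) + (f ω * Z ω - f ω * W ω) := by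
    filter_upwards [hpos, hWpos] with ω hz hw
    have hz' : (0:ℝ) ≤ Z ω := hz
    have hw' : (0:ℝ) ≤ W ω := hw
    have h1 : (0:ℝ) < 1 + Z ω := by linarith
    have h2 : (0:ℝ) < 1 + W ω := by linarith
    simp only [hfdef]
    field_simp
    ring
  have heq := integral_congr_ae hpt
  rw [integral_sub hI1 hI2] at heq
  have h4 : ∫ ω, (-((Z ω - W ω) ^ 2 / ((1 + Z ω) * (1 + W ω) ^ 2))
      + (f ω * Z ω - f ω * W ω)) ∂μ
      = (-∫ ω, (Z ω - W ω) ^ 2 / ((1 + Z ω) * (1 + W ω) ^ 2) ∂μ)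
        + ((∫ ω, f ω * Z ω ∂μ) - ∫ ω, f ω * W ω ∂μ) := by
    have hI3n : Integrable (fun ω => -((Z ω - W ω) ^ 2 / ((1 + Z ω) * (1 + W ω) ^ 2))) μ :=
      hI3.neg
    have hZWf : Integrable (fun ω => f ω * Z ω - f ω * W ω) μ := hZf.sub hWf
    rw [integral_add hI3n hZWf, integral_neg, integral_sub hZf hWf]
  rw [heq, h4, key]
  ring
end

section
/- Let Zₙ be nonnegative random variables with E[Zₙ] bounded uniformly in n, and Yₙ random elements. If E[Zₙ/(1+Zₙ)] - E[E(Zₙ|Yₙ)/(1+E(Zₙ|Yₙ))] → 0 as n → ∞, then Zₙ - E(Zₙ|Yₙ) → 0 in probability. -/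
open MeasureTheory Filter
open scoped ENNReal

theorem stmt3 {Ω β : Type*} [MeasurableSpace Ω] [MeasurableSpace β]
    (μ : Measure Ω) [IsProbabilityMeasure μ]
    (Z : ℕ → Ω → ℝ) (Y : ℕ → Ω → β) (hY : ∀ n, Measurable (Y n))
    (hZ : ∀ n, Integrable (Z n) μ) (hpos : ∀ n, 0 ≤ᵐ[μ] Z n)
    (C : ℝ) (hbd : ∀ n, ∫ ω, Z n ω ∂μ ≤ C)
    (W : ℕ → Ω → ℝ)
    (hW : ∀ n, W n = μ[Z n | MeasurableSpace.comap (Y n) inferInstance])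
    (hconv : Tendsto
      (fun n => (∫ ω, Z n ω / (1 + Z n ω) ∂μ) - ∫ ω, W n ω / (1 + W n ω) ∂μ)
      atTop (nhds 0)) :
    ∀ ε > (0 : ℝ),
      Tendsto (fun n => μ {ω | ε < |Z n ω - W n ω|}) atTop (nhds 0) := by
  intro ε hε
  have hle : ∀ n, MeasurableSpace.comap (Y n) inferInstance ≤ ‹MeasurableSpace Ω› :=
    fun n => (hY n).comap_le
  haveI hsf : ∀ n, SigmaFinite (μ.trim (hle n)) := fun n => inferInstance
  have hWsm : ∀ n, StronglyMeasurable[MeasurableSpace.comap (Y n) inferInstance] (W n) :=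
    fun n => (hW n) ▸ stronglyMeasurable_condExp
  have hWmeas : ∀ n, Measurable (W n) := fun n => ((hWsm n).mono (hle n)).measurable
  have hWint : ∀ n, Integrable (W n) μ := fun n => (hW n) ▸ integrable_condExp
  have hWnn : ∀ n, 0 ≤ᵐ[μ] W n := fun n => (hW n) ▸ condExp_nonneg (hpos n)
  have hWZ : ∀ n, ∫ ω, W n ω ∂μ = ∫ ω, Z n ω ∂μ := fun n => by
    rw [hW n]; exact integral_condExp (hle n)
  -- the bounded weight h = (1 + max W 0)⁻²
  set h : ℕ → Ω → ℝ := fun n ω => ((1 + max (W n ω) 0) ^ 2)⁻¹ with hh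
  have hhpos : ∀ n ω, 0 < h n ω := by
    intro n ω
    have : (1:ℝ) ≤ 1 + max (W n ω) 0 := by simp [le_max_right]
    positivity
  have hhle : ∀ n ω, h n ω ≤ 1 := by
    intro n ω
    have h1 : (1:ℝ) ≤ 1 + max (W n ω) 0 := by simp [le_max_right]
    have h2 : (1:ℝ) ≤ (1 + max (W n ω) 0) ^ 2 := by nlinarith
    exact inv_le_one_of_one_le₀ h2
  have hhsm : ∀ n, StronglyMeasurable[MeasurableSpace.comap (Y n) inferInstance] (h n) := by
    intro n
    have : Measurable[MeasurableSpace.comap (Y n) inferInstance] (h n) := by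
      exact (((measurable_const.add ((hWsm n).measurable.max measurable_const)).pow_const 2).inv)
    exact this.stronglyMeasurable
  have hhmeas : ∀ n, Measurable (h n) := fun n => ((hhsm n).mono (hle n)).measurable
  -- pull-out: ∫ h Z = ∫ h W
  have hkey : ∀ n, ∫ ω, h n ω * Z n ω ∂μ = ∫ ω, h n ω * W n ω ∂μ := by
    intro n
    have hint : Integrable (fun ω => h n ω * Z n ω) μ :=
      (hZ n).bdd_mul (hhmeas n).aestronglyMeasurable
        (ae_of_all μ fun ω => (by rw [Real.norm_eq_abs, abs_of_pos (hhpos n ω)]; exact hhle n ω : ‖h n ω‖ ≤ (1:ℝ)))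
    have hmul := condExp_mul_of_stronglyMeasurable_left (hhsm n) (by exact hint) (hZ n)
    calc ∫ ω, h n ω * Z n ω ∂μ
        = ∫ ω, (μ[h n * Z n|MeasurableSpace.comap (Y n) inferInstance]) ω ∂μ :=
          (integral_condExp (hle n)).symm
      _ = ∫ ω, (h n * μ[Z n|MeasurableSpace.comap (Y n) inferInstance]) ω ∂μ :=
          integral_congr_ae hmul
      _ = ∫ ω, h n ω * W n ω ∂μ := by rw [← hW n]; rfl
  -- integrabilities
  have iZg : ∀ n, Integrable (fun ω => Z n ω / (1 + Z n ω)) μ := by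
    intro n
    refine Integrable.mono' (integrable_const 1)
      ((hZ n).aemeasurable.div (aemeasurable_const.add (hZ n).aemeasurable)).aestronglyMeasurable ?_
    filter_upwards [hpos n] with ω hz
    have hz' : (0:ℝ) ≤ Z n ω := hz
    rw [Real.norm_eq_abs, abs_of_nonneg (div_nonneg hz' (by linarith))]
    rw [div_le_one (by linarith)]; linarith
  have iWg : ∀ n, Integrable (fun ω => W n ω / (1 + W n ω)) μ := by
    intro n
    refine Integrable.mono' (integrable_const 1)
      ((hWint n).aemeasurable.div (aemeasurable_const.add (hWint n).aemeasurable)).aestronglyMeasurable ?_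
    filter_upwards [hWnn n] with ω hw
    have hw' : (0:ℝ) ≤ W n ω := hw
    rw [Real.norm_eq_abs, abs_of_nonneg (div_nonneg hw' (by linarith))]
    rw [div_le_one (by linarith)]; linarith
  have ih2 : ∀ n, Integrable (fun ω => h n ω * (Z n ω - W n ω)) μ := by
    intro n
    exact ((hZ n).sub (hWint n)).bdd_mul (hhmeas n).aestronglyMeasurable
      (ae_of_all μ fun ω => (by rw [Real.norm_eq_abs, abs_of_pos (hhpos n ω)]; exact hhle n ω : ‖h n ω‖ ≤ (1:ℝ)))
  have hzero : ∀ n, ∫ ω, h n ω * (Z n ω - W n ω) ∂μ = 0 := by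
    intro n
    have : (fun ω => h n ω * (Z n ω - W n ω))
        = fun ω => h n ω * Z n ω - h n ω * W n ω := by funext ω; ring
    rw [this, integral_sub ((hZ n).bdd_mul (hhmeas n).aestronglyMeasurable
        (ae_of_all μ fun ω => (by rw [Real.norm_eq_abs, abs_of_pos (hhpos n ω)]; exact hhle n ω : ‖h n ω‖ ≤ (1:ℝ))))
      ((hWint n).bdd_mul (hhmeas n).aestronglyMeasurable
        (ae_of_all μ fun ω => (by rw [Real.norm_eq_abs, abs_of_pos (hhpos n ω)]; exact hhle n ω : ‖h n ω‖ ≤ (1:ℝ)))),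
      hkey n, sub_self]
  -- the defect D and the identity
  set D : ℕ → Ω → ℝ := fun n ω =>
    (Z n ω - W n ω) ^ 2 * (h n ω * (1 + max (Z n ω) 0)⁻¹) with hD
  have hDnn : ∀ n ω, 0 ≤ D n ω := by
    intro n ω
    have h1 : (0:ℝ) < 1 + max (Z n ω) 0 := by
      have := le_max_right (Z n ω) 0; linarith
    have := hhpos n ω
    positivity
  have hid : ∀ n, D n =ᵐ[μ] fun ω =>
      W n ω / (1 + W n ω) + h n ω * (Z n ω - W n ω) - Z n ω / (1 + Z n ω) := by
    intro n
    filter_upwards [hpos n, hWnn n] with ω hz hw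
    have hz' : (0:ℝ) ≤ Z n ω := hz
    have hw' : (0:ℝ) ≤ W n ω := hw
    have hz1 : (0:ℝ) < 1 + Z n ω := by linarith
    have hw1 : (0:ℝ) < 1 + W n ω := by linarith
    simp only [hD, hh, max_eq_left hz', max_eq_left hw']
    field_simp
    ring
  have iD : ∀ n, Integrable (D n) μ := by
    intro n
    exact (Integrable.sub ((iWg n).add (ih2 n)) (iZg n)).congr (hid n).symm
  have hDint : ∀ n, ∫ ω, D n ω ∂μ
      = (∫ ω, W n ω / (1 + W n ω) ∂μ) - ∫ ω, Z n ω / (1 + Z n ω) ∂μ := by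
    intro n
    calc ∫ ω, D n ω ∂μ
        = ∫ ω, ((W n ω / (1 + W n ω) + h n ω * (Z n ω - W n ω)) - Z n ω / (1 + Z n ω)) ∂μ :=
          integral_congr_ae (hid n)
      _ = (∫ ω, (W n ω / (1 + W n ω) + h n ω * (Z n ω - W n ω)) ∂μ)
          - ∫ ω, Z n ω / (1 + Z n ω) ∂μ := integral_sub ((iWg n).add (ih2 n)) (iZg n)
      _ = ((∫ ω, W n ω / (1 + W n ω) ∂μ) + ∫ ω, h n ω * (Z n ω - W n ω) ∂μ)
          - ∫ ω, Z n ω / (1 + Z n ω) ∂μ := by rw [integral_add (iWg n) (ih2 n)]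
      _ = (∫ ω, W n ω / (1 + W n ω) ∂μ) - ∫ ω, Z n ω / (1 + Z n ω) ∂μ := by
          rw [hzero n, add_zero]
  have hA : Tendsto (fun n => ∫ ω, D n ω ∂μ) atTop (nhds 0) := by
    simp only [hDint]
    simpa using hconv.neg
  -- final assembly
  rw [ENNReal.tendsto_nhds_zero]
  intro δ hδ
  obtain ⟨d, hd0, hdδ⟩ : ∃ d : ℝ, 0 < d ∧ ENNReal.ofReal d ≤ δ := by
    rcases eq_or_ne δ ⊤ with hT | hT
    · exact ⟨1, one_pos, by simp [hT]⟩
    · exact ⟨δ.toReal, ENNReal.toReal_pos hδ.ne' hT, by rw [ENNReal.ofReal_toReal hT]⟩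
  have hC : 0 ≤ C := le_trans (integral_nonneg_of_ae (hpos 0)) (hbd 0)
  set M : ℝ := max 1 (3 * C / d) with hM
  have hM0 : (0:ℝ) < M := lt_of_lt_of_le one_pos (le_max_left _ _)
  have hCM : C / M ≤ d / 3 := by
    have h1 : 3 * C / d ≤ M := le_max_right _ _
    rw [div_le_iff₀ hd0] at h1
    rw [div_le_div_iff₀ hM0 (by norm_num)]
    linarith
  set c : ℝ := ε ^ 2 / (1 + M) ^ 3 with hc
  have hc0 : 0 < c := by positivity
  -- Markov for Z and W at level M
  have markov : ∀ (f : Ω → ℝ), Integrable f μ → 0 ≤ᵐ[μ] f → (∫ ω, f ω ∂μ ≤ C) →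
      μ {ω | M < f ω} ≤ ENNReal.ofReal (d / 3) := by
    intro f hf hf0 hfC
    have h1 := mul_meas_ge_le_integral_of_nonneg hf0 hf M
    have h2 : μ {ω | M < f ω} ≤ μ {ω | M ≤ f ω} :=
      measure_mono fun ω hω => le_of_lt (Set.mem_setOf_eq ▸ hω)
    refine le_trans h2 ?_
    rw [ENNReal.le_ofReal_iff_toReal_le (measure_ne_top μ _) (by positivity)]
    have h3 : (μ {ω | M ≤ f ω}).toReal ≤ C / M := by
      rw [le_div_iff₀ hM0]
      calc (μ {ω | M ≤ f ω}).toReal * M = M * (μ {ω | M ≤ f ω}).toReal := by ring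
        _ ≤ ∫ ω, f ω ∂μ := h1
        _ ≤ C := hfC
    linarith
  have hev : ∀ᶠ n in atTop, ∫ ω, D n ω ∂μ < c * (d / 3) :=
    hA.eventually_lt_const (by positivity)
  filter_upwards [hev] with n hn
  -- Markov for D at level c
  have hDm : μ {ω | c ≤ D n ω} ≤ ENNReal.ofReal (d / 3) := by
    have h1 := mul_meas_ge_le_integral_of_nonneg (ae_of_all μ (hDnn n)) (iD n) c
    rw [ENNReal.le_ofReal_iff_toReal_le (measure_ne_top μ _) (by positivity)]
    have h3 : c * (μ {ω | c ≤ D n ω}).toReal ≤ c * (d / 3) := le_trans h1 hn.le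
    exact le_of_mul_le_mul_left h3 hc0
  -- a.e. inclusion of the bad set
  have hincl : μ {ω | ε < |Z n ω - W n ω|}
      ≤ μ ({ω | M < Z n ω} ∪ ({ω | M < W n ω} ∪ {ω | c ≤ D n ω})) := by
    apply measure_mono_ae
    filter_upwards [hpos n, hWnn n] with ω hz hw hs
    have hz' : (0:ℝ) ≤ Z n ω := hz
    have hw' : (0:ℝ) ≤ W n ω := hw
    by_cases h1 : M < Z n ω
    · exact Or.inl h1
    by_cases h2 : M < W n ω
    · exact Or.inr (Or.inl h2)
    refine Or.inr (Or.inr ?_)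
    push_neg at h1 h2
    have hz1 : (0:ℝ) < 1 + Z n ω := by linarith
    have hw1 : (0:ℝ) < 1 + W n ω := by linarith
    have hsε : ε < |Z n ω - W n ω| := hs
    have hsq : ε ^ 2 ≤ (Z n ω - W n ω) ^ 2 := by
      have := sq_abs (Z n ω - W n ω)
      nlinarith [abs_nonneg (Z n ω - W n ω)]
    have hden : (1 + W n ω) ^ 2 * (1 + Z n ω) ≤ (1 + M) ^ 3 := by
      have a1 : (1 + W n ω) ^ 2 ≤ (1 + M) ^ 2 := by nlinarith
      have a2 : 1 + Z n ω ≤ 1 + M := by linarith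
      have a3 := mul_le_mul a1 a2 (by linarith) (by positivity)
      nlinarith
    have hDeq : D n ω = (Z n ω - W n ω) ^ 2 / ((1 + W n ω) ^ 2 * (1 + Z n ω)) := by
      simp only [hD, hh, max_eq_left hz', max_eq_left hw']
      rw [div_eq_mul_inv, mul_inv]
    show c ≤ D n ω
    rw [hDeq, hc]
    exact div_le_div₀ (sq_nonneg _) hsq (by positivity) hden
  calc μ {ω | ε < |Z n ω - W n ω|}
      ≤ μ ({ω | M < Z n ω} ∪ ({ω | M < W n ω} ∪ {ω | c ≤ D n ω})) := hincl
    _ ≤ μ {ω | M < Z n ω} + (μ {ω | M < W n ω} + μ {ω | c ≤ D n ω}) :=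
        le_trans (measure_union_le _ _) (add_le_add le_rfl (measure_union_le _ _))
    _ ≤ ENNReal.ofReal (d / 3) + (ENNReal.ofReal (d / 3) + ENNReal.ofReal (d / 3)) := by
        exact add_le_add (markov (Z n) (hZ n) (hpos n) (hbd n))
          (add_le_add (markov (W n) (hWint n) (hWnn n) (by rw [hWZ n]; exact hbd n)) hDm)
    _ = ENNReal.ofReal (d / 3 + (d / 3 + d / 3)) := by
        rw [ENNReal.ofReal_add (by positivity) (by positivity),
          ENNReal.ofReal_add (by positivity) (by positivity)]
    _ ≤ δ := by rw [show d / 3 + (d / 3 + d / 3) = d by ring]; exact hdδ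
end

section
/- Let C be a real symmetric p×p matrix, w ∈ ℝᵖ, and z ∈ ℂ with Im(z) > 0. Then |wᵀ(C - zI)⁻² w| / |1 + wᵀ(C - zI)⁻¹ w| ≤ 1/Im(z). -/
open Matrix

theorem stmt10 (p : ℕ) (C : Matrix (Fin p) (Fin p) ℝ) (hC : C.IsSymm)
    (z : ℂ) (hz : 0 < z.im) (w : Fin p → ℝ) :
    let wc : Fin p → ℂ := fun i => (w i : ℂ)
    let A : Matrix (Fin p) (Fin p) ℂ :=
      (C.map (fun r => (r : ℂ)) - z • (1 : Matrix (Fin p) (Fin p) ℂ))⁻¹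
    ‖wc ⬝ᵥ (A * A).mulVec wc‖ / ‖1 + wc ⬝ᵥ A.mulVec wc‖ ≤
      1 / z.im := by
  intro wc A
  set Cc : Matrix (Fin p) (Fin p) ℂ := C.map (fun r => (r : ℂ)) with hCc
  set M : Matrix (Fin p) (Fin p) ℂ := Cc - z • 1 with hMdef
  have hA : A = M⁻¹ := rfl
  -- Cc is Hermitian (and symmetric)
  have hCcH : Ccᴴ = Cc := by
    ext i j
    simp [hCc, Matrix.conjTranspose_apply, Matrix.map_apply, hC.apply]
  have hCcT : Ccᵀ = Cc := by
    ext i j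
    simp [hCc, Matrix.transpose_apply, Matrix.map_apply, hC.apply]
  have hMT : Mᵀ = M := by
    rw [hMdef, Matrix.transpose_sub, hCcT, Matrix.transpose_smul, Matrix.transpose_one]
  -- quadratic form star v ⬝ᵥ Cc.mulVec v is real
  have hSreal : ∀ v : Fin p → ℂ, (star v ⬝ᵥ Cc.mulVec v).im = 0 := by
    intro v
    have h : (starRingEnd ℂ) (star v ⬝ᵥ Cc.mulVec v) = star v ⬝ᵥ Cc.mulVec v := by
      have : star (star v ⬝ᵥ Cc.mulVec v) = star (Cc.mulVec v) ⬝ᵥ star (star v) := by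
        rw [star_dotProduct]
        simp
      rw [show (starRingEnd ℂ) (star v ⬝ᵥ Cc.mulVec v) = star (star v ⬝ᵥ Cc.mulVec v) from rfl,
        this, star_star, Matrix.star_mulVec, hCcH]
      rw [Matrix.dotProduct_mulVec]
    exact Complex.conj_eq_iff_im.1 h
  -- star v ⬝ᵥ v is a nonneg real
  have hNval : ∀ v : Fin p → ℂ, star v ⬝ᵥ v = ((∑ i, Complex.normSq (v i) : ℝ) : ℂ) := by
    intro v
    simp [dotProduct, Complex.normSq_eq_conj_mul_self]
  -- M is invertible
  have hdet : IsUnit M.det := by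
    rw [isUnit_iff_ne_zero]
    intro hd
    obtain ⟨v, hv0, hv⟩ := Matrix.exists_mulVec_eq_zero_iff.2 hd
    have h1 : star v ⬝ᵥ M.mulVec v = 0 := by rw [hv, dotProduct_zero]
    have h2 : M.mulVec v = Cc.mulVec v - z • v := by
      rw [hMdef, Matrix.sub_mulVec, Matrix.smul_mulVec, Matrix.one_mulVec]
    rw [h2, dotProduct_sub, dotProduct_smul] at h1
    have h3 : star v ⬝ᵥ Cc.mulVec v = z * (star v ⬝ᵥ v) := by
      have := sub_eq_zero.1 h1
      rw [this]; simp [smul_eq_mul]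
    have h4 := congrArg Complex.im h3
    rw [hSreal, hNval] at h4
    simp [Complex.mul_im] at h4
    have hvpos : 0 < ∑ i, Complex.normSq (v i) := by
      rcases Function.ne_iff.1 hv0 with ⟨i, hi⟩
      have : 0 < Complex.normSq (v i) := Complex.normSq_pos.2 hi
      exact lt_of_lt_of_le this (Finset.single_le_sum (fun j _ => Complex.normSq_nonneg _) (Finset.mem_univ i))
    rcases h4 with h4 | h4
    · exact hz.ne' h4
    · exact hvpos.ne' h4
  -- set v := A.mulVec wc
  set v : Fin p → ℂ := A.mulVec wc with hv
  have hMA : M * A = 1 := Matrix.mul_nonsing_inv M hdet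
  have hwv : M.mulVec v = wc := by
    rw [hv, hA, Matrix.mulVec_mulVec, ← hA, hMA, Matrix.one_mulVec]
  have hAT : Aᵀ = A := by rw [hA, Matrix.transpose_nonsing_inv, hMT]
  set n : ℝ := ∑ i, Complex.normSq (v i) with hn
  have hn0 : 0 ≤ n := Finset.sum_nonneg fun i _ => Complex.normSq_nonneg _
  -- numerator
  have hnum : wc ⬝ᵥ (A * A).mulVec wc = v ⬝ᵥ v := by
    rw [← Matrix.mulVec_mulVec, ← hv, Matrix.dotProduct_mulVec, ← Matrix.mulVec_transpose, hAT,
      ← hv]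
  have hnumle : ‖v ⬝ᵥ v‖ ≤ n := by
    rw [hn]
    have hd : v ⬝ᵥ v = ∑ i, v i * v i := rfl
    rw [hd]
    calc ‖∑ i, v i * v i‖ ≤ ∑ i, ‖v i * v i‖ :=
          norm_sum_le _ _
      _ = ∑ i, Complex.normSq (v i) := by
          refine Finset.sum_congr rfl fun i _ => ?_
          rw [norm_mul, Complex.normSq_eq_norm_sq, sq]
  -- denominator imaginary part
  have hwcstar : star wc = wc := by
    ext i; simp [wc]
  have hden : (wc ⬝ᵥ v).im = z.im * n := by
    have h1 : wc ⬝ᵥ v = star wc ⬝ᵥ v := by rw [hwcstar]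
    have h2 : star wc = star v ᵥ* Mᴴ := by rw [← hwv, Matrix.star_mulVec]
    have hMH : Mᴴ = Cc - (starRingEnd ℂ) z • 1 := by
      rw [hMdef, Matrix.conjTranspose_sub, hCcH, Matrix.conjTranspose_smul,
        Matrix.conjTranspose_one]
      rfl
    rw [h1, h2, ← Matrix.dotProduct_mulVec, hMH, Matrix.sub_mulVec,
      Matrix.smul_mulVec, Matrix.one_mulVec, dotProduct_sub, dotProduct_smul,
      smul_eq_mul, hNval]
    simp [Complex.sub_im, Complex.mul_im, hSreal, ← hn]
  have hdenge : z.im * n ≤ ‖1 + wc ⬝ᵥ A.mulVec wc‖ := by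
    have h1 : (1 + wc ⬝ᵥ v).im = z.im * n := by
      rw [Complex.add_im, hden, Complex.one_im, zero_add]
    calc z.im * n = (1 + wc ⬝ᵥ v).im := h1.symm
      _ ≤ |(1 + wc ⬝ᵥ v).im| := le_abs_self _
      _ ≤ ‖1 + wc ⬝ᵥ v‖ := Complex.abs_im_le_norm _
  rw [hnum]
  rcases eq_or_lt_of_le hn0 with hn0' | hn0'
  · have h0 : ‖v ⬝ᵥ v‖ = 0 :=
      le_antisymm (hnumle.trans hn0'.ge) (norm_nonneg _)
    rw [h0, zero_div]
    positivity
  · have hdpos : 0 < z.im * n := mul_pos hz hn0'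
    calc ‖v ⬝ᵥ v‖ / ‖1 + wc ⬝ᵥ A.mulVec wc‖
        ≤ n / (z.im * n) := div_le_div₀ hn0 hnumle hdpos hdenge
      _ = 1 / z.im := by rw [mul_comm, div_mul_eq_div_div, div_self hn0'.ne']
end
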